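/- (Theorem 2, quantitative lower bound.) There exists an integer M_0 such that for all integers M ≥ M_0 and all positive integers N_K with N_K > 2√M, the hybrid distribution p(n) = (1/(2^M (N_K+1))) · Σ_{k=0}^{N_K} C(M, n − k) satisfies Σ_{n=−1}^{N_K+M} (√(p(n+1)) − √(p(n)))² ≥ 1/(5 (N_K+1) √M) (with p(n) := 0 for n < 0 or n > N_K + M). Consequently, the canonical phase variance of the hybrid scheme's equivalent two-mode state on N = N_K + M total resources is Ω(N^{−3/2}). -/

import Mathlib

/-- The binomial coefficient `C(M, j)` extended to integer `j`,
with `C(M, j) = 0` for `j < 0` (and automatically for `j > M`). -/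
def binomZ (M : ℕ) (j : ℤ) : ℕ :=
  if 0 ≤ j then Nat.choose M j.toNat else 0

/-- The hybrid distribution `p(n) = (1/(2^M (N_K+1))) · Σ_{k=0}^{N_K} C(M, n − k)`,
the squared coefficients of the equivalent two-mode state of the hybrid scheme
(automatically `0` for `n < 0` or `n > N_K + M`). -/
noncomputable def hybridP (NK M : ℕ) (n : ℤ) : ℝ :=
  (∑ k ∈ Finset.range (NK + 1), (binomZ M (n - k) : ℝ)) / (2 ^ M * ((NK : ℝ) + 1))



/-- Central binomial lower bound in ℕ: `16^M ≤ 4 M C(2M,M)²` for `M ≥ 1`. -/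
lemma cb_lower (M : ℕ) (hM : 1 ≤ M) : 16 ^ M ≤ 4 * M * (Nat.centralBinom M) ^ 2 := by
  induction M with
  | zero => omega
  | succ m ih =>
    rcases Nat.eq_or_lt_of_le hM with h | h
    · have : m = 0 := by omega
      subst this; decide
    · have hm : 1 ≤ m := by omega
      have IH := ih hm
      have key : (m + 1) * Nat.centralBinom (m + 1) = 2 * (2 * m + 1) * Nat.centralBinom m :=
        Nat.succ_mul_centralBinom_succ m
      have h2 : (m+1) * (16 ^ (m+1)) ≤ (m+1) * (4 * (m+1) * Nat.centralBinom (m+1) ^ 2) := by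
        have e : (m+1) * (4 * (m+1) * Nat.centralBinom (m+1) ^ 2)
            = 4 * ((m+1) * Nat.centralBinom (m+1)) ^ 2 := by ring
        rw [e, key]
        have : 4 * (2 * (2*m+1) * Nat.centralBinom m) ^ 2
            = 16 * ((2*m+1)^2 * Nat.centralBinom m ^ 2) := by ring
        rw [this]
        have h3 : (m+1) * 16 ^ (m+1) = 16 * ((m+1) * 16 ^ m) := by ring
        rw [h3]
        have h4 : (m+1) * 16 ^ m ≤ (m+1) * (4 * m * Nat.centralBinom m ^ 2) :=
          Nat.mul_le_mul_left _ IH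
        have h5 : (m+1) * (4 * m * Nat.centralBinom m ^ 2) ≤ (2*m+1)^2 * Nat.centralBinom m ^ 2 := by
          have : (m+1) * (4 * m) ≤ (2*m+1)^2 := by nlinarith
          calc (m+1) * (4 * m * Nat.centralBinom m ^ 2) = ((m+1)*(4*m)) * Nat.centralBinom m ^ 2 := by ring
            _ ≤ (2*m+1)^2 * Nat.centralBinom m ^ 2 := Nat.mul_le_mul_right _ this
        exact Nat.mul_le_mul_left 16 (le_trans h4 h5)
      exact Nat.le_of_mul_le_mul_left h2 (by omega)

/-- Vandermonde specialization: `C(2M, M+d) = Σ_{i=0}^{M} C(M,i) C(M,d+i)`. -/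
lemma vand (M d : ℕ) :
    Nat.choose (2*M) (M + d) = ∑ i ∈ Finset.range (M+1), Nat.choose M i * Nat.choose M (d + i) := by
  have h0 : 2 * M = M + M := by ring
  rw [h0, Nat.add_choose_eq]
  rw [Finset.Nat.sum_antidiagonal_eq_sum_range_succ_mk]
  -- Σ_{k ∈ range (M+d+1)} C(M,k) * C(M, M+d-k)
  have hsub : ∑ k ∈ Finset.range (M + d + 1), Nat.choose M k * Nat.choose M (M + d - k)
      = ∑ k ∈ Finset.Ico d (M + d + 1), Nat.choose M k * Nat.choose M (M + d - k) := by
    rw [Finset.range_eq_Ico]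
    refine (Finset.sum_subset (Finset.Ico_subset_Ico (by omega) le_rfl) ?_).symm
    intro k hk hk'
    simp only [Finset.mem_Ico] at hk hk'
    have : M < M + d - k := by omega
    rw [Nat.choose_eq_zero_of_lt this, mul_zero]
  rw [hsub, Finset.sum_Ico_eq_sum_range]
  have hlen : M + d + 1 - d = M + 1 := by omega
  rw [hlen]
  apply Finset.sum_congr rfl
  intro i hi
  simp only [Finset.mem_range] at hi
  have h1 : M + d - (d + i) = M - i := by omega
  rw [h1, mul_comm, Nat.choose_symm (by omega)]


/-- `C(2M, M+d) ≤ C(2M,M) exp(−d²/(2M))` for `d ≤ M`, `M ≥ 1`. -/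
lemma ratio_exp (M : ℕ) (hM : 1 ≤ M) : ∀ d : ℕ, d ≤ M →
    (Nat.choose (2*M) (M + d) : ℝ) * Real.exp ((d:ℝ)^2 / (2*M)) ≤ Nat.choose (2*M) M := by
  intro d
  induction d with
  | zero => simp
  | succ e ih =>
    intro hd
    have he : e ≤ M := by omega
    have IH := ih he
    have hMR : (0:ℝ) < M := by positivity
    -- recurrence: C(2M, M+e+1) * (M+e+1) = C(2M, M+e) * (M−e)
    have hrec : Nat.choose (2*M) (M + e + 1) * (M + e + 1) = Nat.choose (2*M) (M + e) * (M - e) := by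
      have := Nat.choose_succ_right_eq (2*M) (M + e)
      have h2 : 2*M - (M+e) = M - e := by omega
      rw [h2] at this
      exact this
    have hrecR : (Nat.choose (2*M) (M + e + 1) : ℝ) * ((M:ℝ) + e + 1)
        = (Nat.choose (2*M) (M + e) : ℝ) * ((M:ℝ) - e) := by
      have := congrArg (Nat.cast : ℕ → ℝ) hrec
      push_cast [Nat.cast_sub he] at this
      convert this using 2 <;> push_cast <;> ring
    -- key factor bound: (M−e) * exp((2e+1)/(2M)) ≤ M+e+1
    have hfac : ((M:ℝ) - e) * Real.exp ((2*(e:ℝ)+1) / (2*M)) ≤ (M:ℝ) + e + 1 := by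
      have hx : (1:ℝ) - (2*(e:ℝ)+1)/(2*M) ≤ Real.exp (-((2*(e:ℝ)+1)/(2*M))) := by
        have := Real.add_one_le_exp (-((2*(e:ℝ)+1)/(2*M)))
        linarith
      have hME : ((M:ℝ) - e) ≤ ((M:ℝ) + e + 1) * (1 - (2*(e:ℝ)+1)/(2*M)) := by
        have heM : (e:ℝ) + 1 ≤ M := by exact_mod_cast Nat.cast_le.mpr hd
        have hq : (0:ℝ) ≤ (2*(e:ℝ)+1)/(2*M) := by positivity
        have hX : ((M:ℝ)+e+1) * ((2*(e:ℝ)+1)/(2*M)) ≤ 2*(e:ℝ)+1 := by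
          have h1 : ((M:ℝ)+e+1) * ((2*(e:ℝ)+1)/(2*M)) ≤ (2*(M:ℝ)) * ((2*(e:ℝ)+1)/(2*M)) :=
            mul_le_mul_of_nonneg_right (by linarith) hq
          have h2 : (2*(M:ℝ)) * ((2*(e:ℝ)+1)/(2*M)) = 2*(e:ℝ)+1 := by
            field_simp
          linarith
        rw [mul_sub, mul_one]
        linarith
      have hpos : (0:ℝ) ≤ (M:ℝ) + e + 1 := by positivity
      calc ((M:ℝ) - e) * Real.exp ((2*(e:ℝ)+1) / (2*M))
          ≤ (((M:ℝ) + e + 1) * (1 - (2*(e:ℝ)+1)/(2*M))) * Real.exp ((2*(e:ℝ)+1) / (2*M)) := by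
            apply mul_le_mul_of_nonneg_right hME (Real.exp_nonneg _)
        _ ≤ (((M:ℝ) + e + 1) * Real.exp (-((2*(e:ℝ)+1)/(2*M)))) * Real.exp ((2*(e:ℝ)+1) / (2*M)) := by
            apply mul_le_mul_of_nonneg_right _ (Real.exp_nonneg _)
            exact mul_le_mul_of_nonneg_left hx hpos
        _ = ((M:ℝ) + e + 1) := by
            rw [mul_assoc, ← Real.exp_add]; simp
    -- combine
    have hexp : Real.exp (((e:ℝ)+1)^2 / (2*M))
        = Real.exp ((e:ℝ)^2 / (2*M)) * Real.exp ((2*(e:ℝ)+1)/(2*M)) := by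
      rw [← Real.exp_add]
      congr 1
      field_simp
      ring
    have hpos1 : (0:ℝ) < (M:ℝ) + e + 1 := by positivity
    have hcast : ((e+1:ℕ):ℝ) = (e:ℝ)+1 := by push_cast; ring
    rw [hcast]
    apply le_of_mul_le_mul_right _ hpos1
    calc (Nat.choose (2*M) (M + (e+1)) : ℝ) * Real.exp (((e:ℝ)+1)^2 / (2*M)) * ((M:ℝ) + e + 1)
        = ((Nat.choose (2*M) (M + e + 1) : ℝ) * ((M:ℝ) + e + 1)) * Real.exp (((e:ℝ)+1)^2 / (2*M)) := by
          rw [show M + (e+1) = M + e + 1 from rfl]; ring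
      _ = ((Nat.choose (2*M) (M + e) : ℝ) * ((M:ℝ) - e)) * Real.exp (((e:ℝ)+1)^2 / (2*M)) := by rw [hrecR]
      _ = ((Nat.choose (2*M) (M + e) : ℝ) * Real.exp ((e:ℝ)^2 / (2*M))) * (((M:ℝ) - e) * Real.exp ((2*(e:ℝ)+1)/(2*M))) := by
          rw [hexp]; ring
      _ ≤ ((Nat.choose (2*M) M : ℝ)) * (((M:ℝ)+e+1)) := by
          apply mul_le_mul IH hfac _ (by positivity)
          have heM : (e:ℝ) ≤ M := by exact_mod_cast he
          apply mul_nonneg (by linarith) (Real.exp_nonneg _)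

lemma cross_le (M d : ℕ) (hM : 1 ≤ M) (hd : 4*M < d*d) :
    7 * (Nat.choose (2*M) (M+d) : ℝ) ≤ Nat.centralBinom M := by
  rcases le_or_gt d M with h | h
  · have hMR : (0:ℝ) < M := by exact_mod_cast hM
    have h2 : (2:ℝ) ≤ (d:ℝ)^2 / (2*M) := by
      rw [le_div_iff₀ (by positivity)]
      have : (4*M:ℕ) < (d*d:ℕ) := hd
      have hc : (4*(M:ℝ)) < (d:ℝ)*(d:ℝ) := by exact_mod_cast this
      nlinarith
    have h7 : (7:ℝ) ≤ Real.exp ((d:ℝ)^2 / (2*M)) := by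
      have he1 : (2.7182818283:ℝ) < Real.exp 1 := Real.exp_one_gt_d9
      have he2 : (7:ℝ) ≤ Real.exp 2 := by
        have : Real.exp 2 = Real.exp 1 * Real.exp 1 := by
          rw [← Real.exp_add]; norm_num
        nlinarith
      calc (7:ℝ) ≤ Real.exp 2 := he2
        _ ≤ Real.exp ((d:ℝ)^2 / (2*M)) := Real.exp_le_exp.mpr h2
    have := ratio_exp M hM d h
    have hB : (Nat.choose (2*M) M : ℝ) = Nat.centralBinom M := by
      rw [Nat.centralBinom]
    rw [hB] at this
    calc 7 * (Nat.choose (2*M) (M+d) : ℝ)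
        ≤ Real.exp ((d:ℝ)^2 / (2*M)) * (Nat.choose (2*M) (M+d) : ℝ) := by
          apply mul_le_mul_of_nonneg_right h7 (by positivity)
      _ = (Nat.choose (2*M) (M+d) : ℝ) * Real.exp ((d:ℝ)^2 / (2*M)) := by ring
      _ ≤ Nat.centralBinom M := this
  · have : 2*M < M + d := by omega
    rw [Nat.choose_eq_zero_of_lt this]
    simp [Nat.centralBinom]

lemma binomZ_natCast (M i : ℕ) : binomZ M (i : ℤ) = Nat.choose M i := by
  simp [binomZ]

lemma binomZ_neg {M : ℕ} {j : ℤ} (h : j < 0) : binomZ M j = 0 := by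
  simp [binomZ, not_le.mpr h]

lemma binomZ_gt {M : ℕ} {j : ℤ} (h : (M:ℤ) < j) : binomZ M j = 0 := by
  have h0 : 0 ≤ j := le_trans (by positivity) (le_of_lt h)
  have : M < j.toNat := by omega
  simp [binomZ, h0, Nat.choose_eq_zero_of_lt this]

/-- sum of squares on rising edge -/
lemma sumA (NK M : ℕ) :
    ∑ i ∈ Finset.range (NK+M+2), binomZ M (i:ℤ) * binomZ M (i:ℤ) = Nat.centralBinom M := by
  have h1 : ∑ i ∈ Finset.range (NK+M+2), binomZ M (i:ℤ) * binomZ M (i:ℤ)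
      = ∑ i ∈ Finset.range (NK+M+2), Nat.choose M i * Nat.choose M i := by
    refine Finset.sum_congr rfl fun i _ => by rw [binomZ_natCast]
  rw [h1]
  have h2 : ∑ i ∈ Finset.range (NK+M+2), Nat.choose M i * Nat.choose M i
      = ∑ i ∈ Finset.range (M+1), Nat.choose M i * Nat.choose M i := by
    symm
    apply Finset.sum_subset (Finset.range_subset_range.mpr (by omega))
    intro i _ hi
    simp only [Finset.mem_range, not_lt] at hi
    rw [Nat.choose_eq_zero_of_lt (by omega), zero_mul]
  rw [h2, Nat.centralBinom]
  have hv := vand M 0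
  simp only [Nat.add_zero, Nat.zero_add] at hv
  rw [hv]

/-- sum of squares on falling edge -/
lemma sumB (NK M : ℕ) :
    ∑ i ∈ Finset.range (NK+M+2), binomZ M ((i:ℤ) - (NK+1)) * binomZ M ((i:ℤ) - (NK+1))
      = Nat.centralBinom M := by
  have hsplit : NK+M+2 = (NK+1) + (M+1) := by omega
  rw [hsplit, Finset.sum_range_add]
  have hz : ∀ i ∈ Finset.range (NK+1), binomZ M ((i:ℤ) - (NK+1)) * binomZ M ((i:ℤ) - (NK+1)) = 0 := by
    intro i hi
    simp only [Finset.mem_range] at hi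
    rw [binomZ_neg (by push_cast; omega)]
  rw [Finset.sum_congr rfl hz, Finset.sum_const_zero, zero_add]
  have h1 : ∀ i ∈ Finset.range (M+1),
      binomZ M ((((NK+1) + i : ℕ):ℤ) - (NK+1)) * binomZ M ((((NK+1) + i : ℕ):ℤ) - (NK+1))
      = Nat.choose M i * Nat.choose M i := by
    intro i _
    have : (((NK+1) + i : ℕ):ℤ) - (NK+1) = (i:ℤ) := by push_cast; ring
    rw [this, binomZ_natCast]
  rw [Finset.sum_congr rfl h1, Nat.centralBinom]
  have hv := vand M 0
  simp only [Nat.add_zero, Nat.zero_add] at hv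
  rw [hv]

/-- cross sum -/
lemma sumC (NK M : ℕ) :
    ∑ i ∈ Finset.range (NK+M+2), binomZ M (i:ℤ) * binomZ M ((i:ℤ) - (NK+1))
      = Nat.choose (2*M) (M + (NK+1)) := by
  have hsplit : NK+M+2 = (NK+1) + (M+1) := by omega
  rw [hsplit, Finset.sum_range_add]
  have hz : ∀ i ∈ Finset.range (NK+1), binomZ M (i:ℤ) * binomZ M ((i:ℤ) - (NK+1)) = 0 := by
    intro i hi
    simp only [Finset.mem_range] at hi
    rw [binomZ_neg (show (i:ℤ) - (NK+1) < 0 by push_cast; omega), mul_zero]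
  rw [Finset.sum_congr rfl hz, Finset.sum_const_zero, zero_add]
  have h1 : ∀ i ∈ Finset.range (M+1),
      binomZ M (((NK+1) + i : ℕ):ℤ) * binomZ M ((((NK+1) + i : ℕ):ℤ) - (NK+1))
      = Nat.choose M i * Nat.choose M ((NK+1) + i) := by
    intro i _
    have h2 : (((NK+1) + i : ℕ):ℤ) - (NK+1) = (i:ℤ) := by push_cast; ring
    rw [h2, binomZ_natCast, binomZ_natCast, mul_comm]
  rw [Finset.sum_congr rfl h1, vand M (NK+1)]

/-- numerator of hybridP is at most 2^M -/
lemma sum_binomZ_le (NK M : ℕ) (n : ℤ) :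
    ∑ k ∈ Finset.range (NK+1), binomZ M (n - k) ≤ 2^M := by
  classical
  have him : ∑ k ∈ Finset.range (NK+1), binomZ M (n - k)
      = ∑ j ∈ (Finset.range (NK+1)).image (fun k : ℕ => n - (k:ℤ)), binomZ M j := by
    rw [Finset.sum_image]
    intro a _ b _ hab
    have : (a:ℤ) = b := by simp only at hab; omega
    exact_mod_cast this
  rw [him]
  have hsub : ∑ j ∈ (Finset.range (NK+1)).image (fun k : ℕ => n - (k:ℤ)), binomZ M j
      ≤ ∑ j ∈ Finset.Icc (0:ℤ) M, binomZ M j := by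
    apply Finset.sum_le_sum_of_ne_zero
    intro j _ hj
    simp only [Finset.mem_Icc]
    constructor
    · by_contra h; exact hj (binomZ_neg (by omega))
    · by_contra h; exact hj (binomZ_gt (by omega))
  refine le_trans hsub ?_
  have : ∑ j ∈ Finset.Icc (0:ℤ) M, binomZ M j = ∑ i ∈ Finset.range (M+1), Nat.choose M i := by
    refine Finset.sum_nbij' (fun j => j.toNat) (fun i => (i:ℤ)) ?_ ?_ ?_ ?_ ?_
    · intro a ha; simp only [Finset.mem_Icc] at ha; simp only [Finset.mem_range]; omega
    · intro a ha; simp only [Finset.mem_range] at ha; simp only [Finset.mem_Icc]; omega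
    · intro a ha; simp only [Finset.mem_Icc] at ha; exact Int.toNat_of_nonneg ha.1
    · intro a _; simp
    · intro a ha; simp only [Finset.mem_Icc] at ha
      simp [binomZ, ha.1]
  rw [this, Nat.sum_range_choose]

lemma hybridP_nonneg (NK M : ℕ) (n : ℤ) : 0 ≤ hybridP NK M n := by
  unfold hybridP
  positivity

lemma hybridP_le (NK M : ℕ) (n : ℤ) : hybridP NK M n ≤ 1 / ((NK:ℝ)+1) := by
  unfold hybridP
  rw [div_le_div_iff₀ (by positivity) (by positivity)]
  have h := sum_binomZ_le NK M n
  have hc : (∑ k ∈ Finset.range (NK+1), (binomZ M (n - k) : ℝ)) ≤ (2:ℝ)^M := by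
    calc (∑ k ∈ Finset.range (NK+1), (binomZ M (n - k) : ℝ))
        = ((∑ k ∈ Finset.range (NK+1), binomZ M (n - k) : ℕ) : ℝ) := by push_cast; rfl
      _ ≤ ((2^M : ℕ) : ℝ) := by exact_mod_cast h
      _ = (2:ℝ)^M := by push_cast; rfl
  have hD : (0:ℝ) < (NK:ℝ)+1 := by positivity
  calc (∑ k ∈ Finset.range (NK+1), (binomZ M (n - k) : ℝ)) * ((NK:ℝ)+1)
      ≤ (2:ℝ)^M * ((NK:ℝ)+1) := mul_le_mul_of_nonneg_right hc (le_of_lt hD)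
    _ = 1 * (2^M * ((NK:ℝ)+1)) := by ring

lemma hybridP_diff (NK M : ℕ) (n : ℤ) :
    hybridP NK M (n+1) - hybridP NK M n
      = ((binomZ M (n+1) : ℝ) - (binomZ M (n - NK) : ℝ)) / (2^M * ((NK:ℝ)+1)) := by
  unfold hybridP
  rw [div_sub_div_same, ← Finset.sum_sub_distrib]
  congr 1
  have key := Finset.sum_range_sub' (f := fun k : ℕ => (binomZ M (n+1-(k:ℤ)) : ℝ)) (NK+1)
  have h1 : ∀ k ∈ Finset.range (NK+1),
      (binomZ M (n+1-(k:ℤ)) : ℝ) - (binomZ M (n+1-((k+1:ℕ):ℤ)) : ℝ)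
      = (binomZ M (n+1-(k:ℤ)) : ℝ) - (binomZ M (n-(k:ℤ)) : ℝ) := by
    intro k _
    have : n+1-((k+1:ℕ):ℤ) = n - (k:ℤ) := by push_cast; ring
    rw [this]
  rw [Finset.sum_congr rfl h1] at key
  have h2 : ∀ k ∈ Finset.range (NK+1),
      ((binomZ M (n+1-(k:ℤ)) : ℝ) - (binomZ M (n-(k:ℤ)) : ℝ))
      = ((binomZ M (n+1-(k:ℤ)) : ℝ) - (binomZ M (n-(k:ℤ)) : ℝ)) := fun _ _ => rfl
  rw [key]
  have h3 : n+1-((NK+1:ℕ):ℤ) = n - (NK:ℤ) := by push_cast; ring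
  rw [h3]
  norm_num

lemma perterm (D a b : ℝ) (hD : 0 < D) (ha : 0 ≤ a) (hb : 0 ≤ b)
    (ha' : a ≤ 1/D) (hb' : b ≤ 1/D) :
    D/4 * (a-b)^2 ≤ (Real.sqrt a - Real.sqrt b)^2 := by
  set x := Real.sqrt a with hxd
  set y := Real.sqrt b with hyd
  have hx : x^2 = a := Real.sq_sqrt ha
  have hy : y^2 = b := Real.sq_sqrt hb
  have hx0 : 0 ≤ x := Real.sqrt_nonneg a
  have hy0 : 0 ≤ y := Real.sqrt_nonneg b
  have h1 : (x+y)^2 ≤ 4/D := by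
    have hx1 : x^2 ≤ 1/D := by rw [hx]; exact ha'
    have hy1 : y^2 ≤ 1/D := by rw [hy]; exact hb'
    have hs : (x+y)^2 ≤ 2*(x^2+y^2) := by nlinarith [sq_nonneg (x-y)]
    have e : (4:ℝ)/D = 4*(1/D) := by ring
    linarith
  have h2 : (a-b)^2 ≤ (x-y)^2 * (4/D) := by
    have he : (a-b)^2 = (x-y)^2 * (x+y)^2 := by rw [← hx, ← hy]; ring
    rw [he]
    exact mul_le_mul_of_nonneg_left h1 (sq_nonneg _)
  have hD' : D ≠ 0 := ne_of_gt hD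
  calc D/4 * (a-b)^2 ≤ D/4 * ((x-y)^2 * (4/D)) := by
        apply mul_le_mul_of_nonneg_left h2 (by positivity)
    _ = (x-y)^2 := by field_simp

/-- Theorem 2, quantitative lower bound: for all sufficiently large `M` and all
positive `N_K > 2√M`, the canonical Collett phase variance
`Σ_{n=−1}^{N_K+M} (√(p(n+1)) − √(p(n)))²` of the hybrid scheme's equivalent two-mode
state is at least `1/(5 (N_K+1) √M)`; hence it is `Ω(N^{−3/2})` in `N = N_K + M`. -/
theorem stmt17 :
    ∃ M₀ : ℕ, ∀ M : ℕ, M₀ ≤ M → ∀ NK : ℕ, 0 < NK → 2 * Real.sqrt M < NK →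
      1 / (5 * ((NK : ℝ) + 1) * Real.sqrt M)
      ≤ ∑ i ∈ Finset.range (NK + M + 2),
          (Real.sqrt (hybridP NK M ((i : ℤ) - 1 + 1))
            - Real.sqrt (hybridP NK M ((i : ℤ) - 1))) ^ 2 := by
  refine ⟨1, fun M hM NK hNK hsq => ?_⟩
  set D : ℝ := (NK:ℝ) + 1 with hDdef
  have hD : 0 < D := by positivity
  set s : ℝ := Real.sqrt M with hsdef
  have hMR : (0:ℝ) < M := by exact_mod_cast hM
  have hs : 0 < s := Real.sqrt_pos.mpr hMR
  have hs2 : s^2 = M := Real.sq_sqrt (le_of_lt hMR)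
  -- N_K² > 4M
  have hNN : 4*M < (NK+1)*(NK+1) := by
    have h1 : (2*s)*(2*s) < (NK:ℝ)*(NK:ℝ) := by
      have h0 : (0:ℝ) ≤ 2*s := by positivity
      exact mul_self_lt_mul_self h0 hsq
    have h2 : (2*s)*(2*s) = 4*(M:ℝ) := by nlinarith [hs2]
    have h3 : (4*(M:ℝ)) < (NK:ℝ)*(NK:ℝ) := by linarith
    have h4 : 4*M < NK*NK := by exact_mod_cast h3
    nlinarith
  set B : ℕ := Nat.centralBinom M with hBdef
  set X : ℕ := Nat.choose (2*M) (M + (NK+1)) with hXdef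
  have hX : 7 * (X:ℝ) ≤ (B:ℝ) := cross_le M (NK+1) hM hNN
  -- lower bound on central binomial
  have hBlow : (4:ℝ)^M ≤ 2*s*(B:ℝ) := by
    have h1 : (16:ℝ)^M ≤ 4*(M:ℝ)*(B:ℝ)^2 := by exact_mod_cast cb_lower M hM
    have h2 : ((4:ℝ)^M)^2 ≤ (2*s*(B:ℝ))^2 := by
      have e1 : ((4:ℝ)^M)^2 = (16:ℝ)^M := by rw [← pow_mul, pow_mul']; norm_num
      have e2 : (2*s*(B:ℝ))^2 = 4*(M:ℝ)*(B:ℝ)^2 := by rw [mul_pow, mul_pow]; rw [hs2]; ring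
      rw [e1, e2]; exact h1
    have h3 : (0:ℝ) ≤ 2*s*(B:ℝ) := by positivity
    nlinarith [pow_pos (show (0:ℝ) < 4 by norm_num) M]
  -- sum manipulation
  set n₂ : ℕ := NK + M + 2 with hn2
  set gR : ℕ → ℝ := fun i => (binomZ M (i:ℤ) : ℝ) with hgR
  set gR' : ℕ → ℝ := fun i => (binomZ M ((i:ℤ) - ((NK:ℤ)+1)) : ℝ) with hgR'
  have SA : ∑ i ∈ Finset.range n₂, (gR i)^2 = (B:ℝ) := by
    rw [hBdef, ← sumA NK M]
    push_cast
    exact Finset.sum_congr rfl fun i _ => by simp [hgR, pow_two]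
  have SB : ∑ i ∈ Finset.range n₂, (gR' i)^2 = (B:ℝ) := by
    rw [hBdef, ← sumB NK M]
    push_cast
    exact Finset.sum_congr rfl fun i _ => by simp [hgR', pow_two]
  have SC : ∑ i ∈ Finset.range n₂, gR i * gR' i = (X:ℝ) := by
    rw [hXdef, ← sumC NK M]
    push_cast
    exact Finset.sum_congr rfl fun i _ => by simp [hgR, hgR']
  set S : ℝ := ∑ i ∈ Finset.range n₂, (gR i - gR' i)^2 with hSdef
  have hSval : S = 2*(B:ℝ) - 2*(X:ℝ) := by
    have h1 : S = ∑ i ∈ Finset.range n₂, ((gR i)^2 + (gR' i)^2 - 2*(gR i * gR' i)) :=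
      Finset.sum_congr rfl fun i _ => by ring
    rw [h1, Finset.sum_sub_distrib, Finset.sum_add_distrib, ← Finset.mul_sum, SA, SB, SC]
    ring
  have hSlow : (12/7)*(B:ℝ) ≤ S := by rw [hSval]; linarith
  -- per-term inequality
  set c : ℝ := D/4 * (1/((2:ℝ)^M*D))^2 with hcdef
  have hterm : ∀ i ∈ Finset.range n₂, c * (gR i - gR' i)^2
      ≤ (Real.sqrt (hybridP NK M ((i:ℤ) - 1 + 1)) - Real.sqrt (hybridP NK M ((i:ℤ) - 1)))^2 := by
    intro i _
    set a : ℝ := hybridP NK M ((i:ℤ) - 1 + 1) with hadef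
    set b : ℝ := hybridP NK M ((i:ℤ) - 1) with hbdef
    have hab : a - b = (gR i - gR' i) / (2^M * D) := by
      have h := hybridP_diff NK M ((i:ℤ) - 1)
      have e1 : (i:ℤ) - 1 + 1 = (i:ℤ) := by ring
      have e2 : (i:ℤ) - 1 - (NK:ℤ) = (i:ℤ) - ((NK:ℤ)+1) := by ring
      rw [e1, e2] at h
      rw [hadef, hbdef, e1, h]
    have key := perterm D a b hD (hybridP_nonneg NK M _) (hybridP_nonneg NK M _)
      (hybridP_le NK M _) (hybridP_le NK M _)
    have e3 : c * (gR i - gR' i)^2 = D/4 * (a-b)^2 := by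
      rw [hab, hcdef]
      ring
    rw [e3]
    exact key
  have hsum : c * S ≤ ∑ i ∈ Finset.range n₂,
      (Real.sqrt (hybridP NK M ((i:ℤ) - 1 + 1)) - Real.sqrt (hybridP NK M ((i:ℤ) - 1)))^2 := by
    rw [hSdef, Finset.mul_sum]
    exact Finset.sum_le_sum hterm
  -- final numeric estimate
  have hc : c = 1/(4*(4:ℝ)^M*D) := by
    have h4 : (4:ℝ)^M = (2:ℝ)^M * 2^M := by rw [← mul_pow]; norm_num
    rw [hcdef, h4]
    have h2M : (2:ℝ)^M ≠ 0 := by positivity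
    have hDne : D ≠ 0 := ne_of_gt hD
    field_simp
  have hfinal : 1/(5*D*s) ≤ c * S := by
    have hcpos : 0 < c := by rw [hc]; positivity
    have h1 : c * ((12/7)*(B:ℝ)) ≤ c * S := by
      apply mul_le_mul_of_nonneg_left hSlow (le_of_lt hcpos)
    have h2 : 1/(5*D*s) ≤ c * ((12/7)*(B:ℝ)) := by
      rw [hc]
      have hBpos : (0:ℝ) ≤ (B:ℝ) := Nat.cast_nonneg _
      have key : (4:ℝ)^M * D ≤ 2*s*(B:ℝ)*D :=
        mul_le_mul_of_nonneg_right hBlow (le_of_lt hD)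
      have pos4 : (0:ℝ) < (4:ℝ)^M := by positivity
      have e : (1:ℝ)/(4*(4:ℝ)^M*D)*((12/7)*(B:ℝ)) = (12*(B:ℝ))/(28*(4:ℝ)^M*D) := by
        have hne1 : (4:ℝ)^M ≠ 0 := by positivity
        have hne2 : D ≠ 0 := ne_of_gt hD
        field_simp
        ring
      rw [e, div_le_div_iff₀ (by positivity) (by positivity)]
      nlinarith [mul_nonneg (mul_nonneg (le_of_lt hs) hBpos) (le_of_lt hD)]
    linarith
  calc 1 / (5 * D * s) ≤ c * S := hfinal
    _ ≤ _ := hsum
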